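/- The Euler tour representation map is a bijection from the set of n-trees to the set of treed permutations of size n. -/

import Mathlib

/-- An `X`-labelled planar rooted tree: an (unlabelled) root together with an ordered
list of pairs (label of child, subtree rooted at that child). -/
inductive LTree (X : Type) : Type
  | node : List (X × LTree X) → LTree X

/-- The list of labels of the non-root nodes, in depth-first (pre-order) traversal. -/
def LTree.labels {X : Type} : LTree X → List X
  | .node ts => (ts.attach.map (fun p => p.1.1 :: p.1.2.labels)).flatten
decreasing_by
  obtain ⟨⟨a, b⟩, hm⟩ := p
  have := List.sizeOf_lt_of_mem hm
  simp only [Prod.mk.sizeOf_spec, LTree.node.sizeOf_spec] at *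
  omega

/-- The degree of a labelled tree: its number of non-root nodes. -/
def LTree.degree {X : Type} (t : LTree X) : ℕ := t.labels.length

/-- The Euler tour representation of a labelled tree: traverse the tree clockwise along
its border from root to root, reading each node's label once when first entering it
and once when finally leaving it. -/
def LTree.euler {X : Type} : LTree X → List X
  | .node ts => (ts.attach.map (fun p => p.1.1 :: (p.1.2.euler ++ [p.1.1]))).flatten
decreasing_by
  obtain ⟨⟨a, b⟩, hm⟩ := p
  have := List.sizeOf_lt_of_mem hm
  simp only [Prod.mk.sizeOf_spec, LTree.node.sizeOf_spec] at *
  omega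

/-- A `2`-permutation of its letter set: every letter of the word appears exactly twice. -/
def IsTwoPerm (w : List ℕ) : Prop := ∀ x ∈ w, w.count x = 2

/-- A treed permutation of size `n`. -/
def IsTreedPerm (n : ℕ) (w : List ℕ) : Prop :=
  w.length = 2 * n ∧ (∀ k ∈ Finset.Icc 1 n, w.count k = 2) ∧
    ∀ i l : Fin w.length, i < l → w.get i = w.get l →
      IsTwoPerm ((w.drop ((i : ℕ) + 1)).take ((l : ℕ) - (i : ℕ) - 1))

theorem LTree.my_ind {X : Type} {P : LTree X → Prop}
    (h : ∀ ts : List (X × LTree X), (∀ p ∈ ts, P p.2) → P (.node ts)) : ∀ t, P t := by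
  have key : ∀ N, ∀ t : LTree X, sizeOf t ≤ N → P t := by
    intro N
    induction N using Nat.strong_induction_on with
    | _ N ih =>
      intro t ht
      obtain ⟨ts⟩ := t
      apply h
      intro p hp
      have h1 := List.sizeOf_lt_of_mem hp
      have h2 : sizeOf p.2 < sizeOf (LTree.node ts) := by
        obtain ⟨a, s⟩ := p
        simp only [Prod.mk.sizeOf_spec, LTree.node.sizeOf_spec] at *
        omega
      exact ih (sizeOf p.2) (by omega) p.2 le_rfl
  intro t; exact key (sizeOf t) t le_rfl

theorem labels_node (ts : List (ℕ × LTree ℕ)) :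
    (LTree.node ts).labels = (ts.map (fun p => p.1 :: p.2.labels)).flatten := by
  rw [LTree.labels]; congr 1; exact (List.attach_map_val (l := ts)) ▸ rfl

theorem euler_node (ts : List (ℕ × LTree ℕ)) :
    (LTree.node ts).euler = (ts.map (fun p => p.1 :: (p.2.euler ++ [p.1]))).flatten := by
  rw [LTree.euler]; congr 1; exact (List.attach_map_val (l := ts)) ▸ rfl

theorem euler_count (t : LTree ℕ) (x : ℕ) : t.euler.count x = 2 * t.labels.count x := by
  induction t using LTree.my_ind with
  | h ts H =>
    rw [euler_node, labels_node]
    induction ts with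
    | nil => simp
    | cons hd tl ih =>
      have h1 := H hd (by simp)
      have h2 := ih (fun p hp => H p (by simp [hp]))
      simp only [List.map_cons, List.flatten_cons, List.count_append, List.count_cons,
        List.count_nil] at *
      omega

theorem euler_length (t : LTree ℕ) : t.euler.length = 2 * t.labels.length := by
  induction t using LTree.my_ind with
  | h ts H =>
    rw [euler_node, labels_node]
    induction ts with
    | nil => simp
    | cons hd tl ih =>
      have h1 := H hd (by simp)
      have h2 := ih (fun p hp => H p (by simp [hp]))
      simp only [List.map_cons, List.flatten_cons, List.length_append, List.length_cons,
        List.length_nil] at *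
      omega

theorem mem_euler {t : LTree ℕ} {x : ℕ} : x ∈ t.euler ↔ x ∈ t.labels := by
  rw [← List.count_pos_iff, ← List.count_pos_iff, euler_count]; omega

theorem decomp : ∀ ts : List (ℕ × LTree ℕ), (LTree.node ts).labels.Nodup →
    ∀ x ∈ (LTree.node ts).labels, ∃ (A : List ℕ) (s : LTree ℕ) (B : List ℕ),
      (LTree.node ts).euler = A ++ x :: (s.euler ++ x :: B) ∧ x ∉ A ∧ x ∉ s.euler ∧ x ∉ B ∧
        s.labels.Nodup
  | [], _, x, hx => by simp [labels_node] at hx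
  | (a, .node ts1) :: tl, h, x, hx => by
    have hlab : (LTree.node ((a, LTree.node ts1) :: tl)).labels
        = a :: ((LTree.node ts1).labels ++ (LTree.node tl).labels) := by
      simp [labels_node]
    have heul : (LTree.node ((a, LTree.node ts1) :: tl)).euler
        = a :: ((LTree.node ts1).euler ++ a :: (LTree.node tl).euler) := by
      simp [euler_node]
    rw [hlab] at h hx
    simp only [List.nodup_cons, List.nodup_append, List.mem_cons, List.mem_append] at h hx
    obtain ⟨ha, hnd1, hnd2, hdisj⟩ := h
    rcases hx with rfl | hx1 | hx2
    · refine ⟨[], LTree.node ts1, (LTree.node tl).euler, by simpa using heul, by simp,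
        fun hc => ha (Or.inl (mem_euler.1 hc)), fun hc => ha (Or.inr (mem_euler.1 hc)), hnd1⟩
    · obtain ⟨A', s, B', heq, hA', hs', hB', hnds⟩ := decomp ts1 hnd1 x hx1
      refine ⟨a :: A', s, B' ++ a :: (LTree.node tl).euler, ?_, ?_, hs', ?_, hnds⟩
      · rw [heul, heq]; simp [List.append_assoc]
      · simp only [List.mem_cons]
        rintro (rfl | hc)
        · exact ha (Or.inl hx1)
        · exact hA' hc
      · simp only [List.mem_append, List.mem_cons]
        rintro (hc | rfl | hc)
        · exact hB' hc
        · exact ha (Or.inl hx1)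
        · exact hdisj _ hx1 _ (mem_euler.1 hc) rfl
    · obtain ⟨A', s, B', heq, hA', hs', hB', hnds⟩ := decomp tl hnd2 x hx2
      refine ⟨a :: ((LTree.node ts1).euler ++ a :: A'), s, B', ?_, ?_, hs', hB', hnds⟩
      · rw [heul, heq]; simp [List.append_assoc]
      · simp only [List.mem_cons, List.mem_append]
        rintro (rfl | hc | rfl | hc)
        · exact ha (Or.inr hx2)
        · exact hdisj _ (mem_euler.1 hc) _ hx2 rfl
        · exact ha (Or.inr hx2)
        · exact hA' hc
termination_by ts => sizeOf ts
decreasing_by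
  · simp only [Prod.mk.sizeOf_spec, LTree.node.sizeOf_spec, List.cons.sizeOf_spec] at *; omega
  · simp only [Prod.mk.sizeOf_spec, LTree.node.sizeOf_spec, List.cons.sizeOf_spec] at *; omega

theorem isTwoPerm_euler {s : LTree ℕ} (h : s.labels.Nodup) : IsTwoPerm s.euler := by
  intro x hx
  rw [euler_count, List.count_eq_one_of_mem h (mem_euler.1 hx)]

theorem slice_eq {A M B : List ℕ} {x : ℕ} (hA : x ∉ A) (hM : x ∉ M) (hB : x ∉ B)
    {w : List ℕ} (hw : w = A ++ x :: (M ++ x :: B))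
    (i l : Fin w.length) (hil : i < l) (hi : w.get i = x) (hl : w.get l = x) :
    (w.drop ((i:ℕ)+1)).take ((l:ℕ) - (i:ℕ) - 1) = M := by
  subst hw
  have key : ∀ j, j < (A ++ x :: (M ++ x :: B)).length →
      (A ++ x :: (M ++ x :: B))[j]? = some x → j = A.length ∨ j = A.length + M.length + 1 := by
    intro j hj h9
    rcases lt_or_ge j A.length with h1 | h1
    · rw [List.getElem?_append_left h1] at h9
      exact absurd (List.mem_of_getElem? h9) hA
    · rw [List.getElem?_append_right h1] at h9
      rcases Nat.eq_or_lt_of_le h1 with h2 | h2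
      · exact Or.inl h2.symm
      · rw [show j - A.length = (j - A.length - 1) + 1 from by omega,
          List.getElem?_cons_succ] at h9
        rcases lt_or_ge (j - A.length - 1) M.length with h4 | h4
        · rw [List.getElem?_append_left h4] at h9
          exact absurd (List.mem_of_getElem? h9) hM
        · rw [List.getElem?_append_right h4] at h9
          rcases Nat.eq_or_lt_of_le h4 with h5 | h5
          · right; omega
          · rw [show j - A.length - 1 - M.length = (j - A.length - 1 - M.length - 1) + 1 from
              by omega, List.getElem?_cons_succ] at h9
            exact absurd (List.mem_of_getElem? h9) hB
  rw [List.get_eq_getElem] at hi hl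
  have ki := key i i.2 (by rw [List.getElem?_eq_getElem i.2, hi])
  have kl := key l l.2 (by rw [List.getElem?_eq_getElem l.2, hl])
  have hiv : (i : ℕ) = A.length ∧ (l : ℕ) = A.length + M.length + 1 := by
    have := hil
    rw [Fin.lt_def] at this
    omega
  obtain ⟨hi1, hl1⟩ := hiv
  rw [hi1, hl1]
  have hd : (A ++ x :: (M ++ x :: B)).drop (A.length + 1) = M ++ x :: B := by
    have h0 : A ++ x :: (M ++ x :: B) = (A ++ [x]) ++ (M ++ x :: B) := by simp
    rw [h0]
    have hlen : A.length + 1 = (A ++ [x]).length := by simp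
    rw [hlen, List.drop_left]
  rw [hd]
  have h1 : A.length + M.length + 1 - A.length - 1 = M.length := by omega
  rw [h1, List.take_left]

def Nested (w : List ℕ) : Prop :=
  ∀ i l : Fin w.length, i < l → w.get i = w.get l →
    IsTwoPerm ((w.drop ((i : ℕ) + 1)).take ((l : ℕ) - (i : ℕ) - 1))

theorem treed_of_euler {n : ℕ} {t : LTree ℕ} (h : t.labels.Perm (List.range' 1 n)) :
    IsTreedPerm n t.euler := by
  have hnd : t.labels.Nodup := h.nodup_iff.2 (List.nodup_range' (s := 1) (n := n))
  have hlen : t.labels.length = n := by simpa using h.length_eq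
  refine ⟨by rw [euler_length, hlen], ?_, ?_⟩
  · intro k hk
    simp only [Finset.mem_Icc] at hk
    have hmem : k ∈ t.labels := by
      rw [h.mem_iff, List.mem_range'_1]
      omega
    rw [euler_count, List.count_eq_one_of_mem hnd hmem]
  · intro i l hil hget
    obtain ⟨ts⟩ := t
    have hx : (LTree.node ts).euler.get i ∈ (LTree.node ts).labels :=
      mem_euler.1 (by rw [List.get_eq_getElem]; exact List.getElem_mem _)
    obtain ⟨A, s, B, heq, hA, hs, hB, hnds⟩ := decomp ts hnd _ hx
    rw [slice_eq hA hs hB heq i l hil rfl (hget ▸ rfl)]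
    exact isTwoPerm_euler hnds

theorem euler_cons (a : ℕ) (s : LTree ℕ) (tl : List (ℕ × LTree ℕ)) :
    (LTree.node ((a, s) :: tl)).euler = a :: (s.euler ++ a :: (LTree.node tl).euler) := by
  simp [euler_node]

theorem indexOf_append_not_mem {a : ℕ} :
    ∀ {E1 : List ℕ}, a ∉ E1 → ∀ E2, List.idxOf a (E1 ++ a :: E2) = E1.length := by
  intro E1
  induction E1 with
  | nil => intro _ E2; simp [List.idxOf_cons_self]
  | cons b tl ih =>
    intro h E2
    simp only [List.mem_cons, not_or] at h
    rw [List.cons_append, List.idxOf_cons_ne _ (fun hc => h.1 hc.symm), ih h.2]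
    rfl

theorem not_mem_take_indexOf (a : ℕ) : ∀ l : List ℕ, a ∉ l.take (List.idxOf a l)
  | [] => by simp
  | b :: tl => by
    by_cases hb : b = a
    · subst hb; simp [List.idxOf_cons_self]
    · rw [List.idxOf_cons_ne _ hb, Nat.succ_eq_add_one, List.take_succ_cons]
      simp only [List.mem_cons, not_or]
      exact ⟨fun hc => hb hc.symm, not_mem_take_indexOf a tl⟩

def decodeF : List ℕ → List (ℕ × LTree ℕ)
  | [] => []
  | a :: rest =>
    (a, .node (decodeF (rest.take (List.idxOf a rest)))) ::
      decodeF (rest.drop (List.idxOf a rest + 1))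
termination_by w => w.length
decreasing_by
  · simp only [List.length_cons, List.length_take]; omega
  · simp only [List.length_cons, List.length_drop]; omega

theorem decodeF_euler : ∀ ts : List (ℕ × LTree ℕ), (LTree.node ts).labels.Nodup →
    decodeF ((LTree.node ts).euler) = ts
  | [], _ => by rw [euler_node]; simp [decodeF]
  | (a, .node ts1) :: tl, h => by
    have hlab : (LTree.node ((a, LTree.node ts1) :: tl)).labels
        = a :: ((LTree.node ts1).labels ++ (LTree.node tl).labels) := by
      simp [labels_node]
    rw [hlab] at h
    simp only [List.nodup_cons, List.nodup_append, List.mem_cons, List.mem_append] at h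
    obtain ⟨ha, hnd1, hnd2, hdisj⟩ := h
    have ha1 : a ∉ (LTree.node ts1).euler := fun hc => ha (Or.inl (mem_euler.1 hc))
    rw [euler_cons, decodeF]
    have hidx : List.idxOf a ((LTree.node ts1).euler ++ a :: (LTree.node tl).euler)
        = (LTree.node ts1).euler.length := indexOf_append_not_mem ha1 _
    rw [hidx]
    have htake : ((LTree.node ts1).euler ++ a :: (LTree.node tl).euler).take
        (LTree.node ts1).euler.length = (LTree.node ts1).euler := List.take_left
    have hdrop : ((LTree.node ts1).euler ++ a :: (LTree.node tl).euler).drop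
        ((LTree.node ts1).euler.length + 1) = (LTree.node tl).euler := by
      have h0 : (LTree.node ts1).euler ++ a :: (LTree.node tl).euler
          = ((LTree.node ts1).euler ++ [a]) ++ (LTree.node tl).euler := by simp
      have h1 : (LTree.node ts1).euler.length + 1 = ((LTree.node ts1).euler ++ [a]).length := by
        simp
      rw [h0, h1, List.drop_left]
    rw [htake, hdrop, decodeF_euler ts1 hnd1, decodeF_euler tl hnd2]
termination_by ts => sizeOf ts
decreasing_by
  · simp only [Prod.mk.sizeOf_spec, LTree.node.sizeOf_spec, List.cons.sizeOf_spec] at *; omega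
  · simp only [Prod.mk.sizeOf_spec, LTree.node.sizeOf_spec, List.cons.sizeOf_spec] at *; omega

theorem Nested.infix {w u p s : List ℕ} (h : Nested w) (hw : w = (p ++ u) ++ s) : Nested u := by
  intro i l hil hget
  have hlu : (l : ℕ) < u.length := l.2
  have hil' : (i : ℕ) < (l : ℕ) := hil
  have hi' : p.length + (i : ℕ) < w.length := by subst hw; simp; omega
  have hl' : p.length + (l : ℕ) < w.length := by subst hw; simp; omega
  have hg : ∀ (j : Fin u.length) (hj' : p.length + (j : ℕ) < w.length),
      w.get ⟨p.length + (j : ℕ), hj'⟩ = u.get j := by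
    intro j hj'
    subst hw
    rw [List.get_eq_getElem, List.get_eq_getElem]
    have h1 : ((p ++ u) ++ s)[p.length + (j : ℕ)]? = some (u[(j : ℕ)]) := by
      rw [List.getElem?_append_left (by simp),
        List.getElem?_append_right (by omega), Nat.add_sub_cancel_left,
        List.getElem?_eq_getElem j.2]
    rw [List.getElem?_eq_getElem hj'] at h1
    exact Option.some_injective _ h1
  have key := h ⟨p.length + (i : ℕ), hi'⟩ ⟨p.length + (l : ℕ), hl'⟩
    (by exact Fin.mk_lt_mk.2 (by omega))
    (by rw [hg ⟨i, i.2⟩ hi', hg ⟨l, l.2⟩ hl']; exact hget)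
  have heq : (w.drop (p.length + (i : ℕ) + 1)).take ((p.length + (l : ℕ)) - (p.length + (i : ℕ)) - 1)
      = (u.drop ((i : ℕ) + 1)).take ((l : ℕ) - (i : ℕ) - 1) := by
    subst hw
    rw [List.append_assoc]
    have h2 : p.length + (i : ℕ) + 1 = p.length + ((i : ℕ) + 1) := by omega
    rw [h2, List.drop_length_add_append, List.drop_append_of_le_length (by omega)]
    rw [List.take_append_of_le_length (by simp; omega)]
    congr 1
    omega
  rw [heq] at key
  exact key

theorem euler_decodeF : ∀ w : List ℕ, IsTwoPerm w → Nested w →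
    (LTree.node (decodeF w)).euler = w
  | [], _, _ => by rw [decodeF, euler_node]; simp
  | a :: rest, htp, hn => by
    have hca : (a :: rest).count a = 2 := htp a (by simp)
    have ha : a ∈ rest := by
      rw [List.count_cons_self] at hca
      exact List.count_pos_iff.1 (by omega)
    set j := List.idxOf a rest with hjdef
    have hj : j < rest.length := List.idxOf_lt_length_iff.2 ha
    have hrest : rest = rest.take j ++ a :: rest.drop (j + 1) := by
      conv_lhs => rw [← List.take_append_drop j rest]
      rw [List.drop_eq_getElem_cons hj, List.getElem_idxOf hj]
    set M := rest.take j with hM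
    set B := rest.drop (j + 1) with hB
    have haM : a ∉ M := by rw [hM, hjdef]; exact not_mem_take_indexOf a rest
    have hw : a :: rest = [a] ++ M ++ (a :: B) := by
      conv_lhs => rw [hrest]
      simp
    have hMlen : M.length = j := by rw [hM, List.length_take]; omega
    have hi0 : (0 : ℕ) < (a :: rest).length := by simp
    have hl0 : j + 1 < (a :: rest).length := by simp; omega
    have hgl : (a :: rest).get ⟨j + 1, hl0⟩ = a := by
      rw [List.get_eq_getElem]
      simp only [List.getElem_cons_succ]
      exact List.getElem_idxOf hj
    have htpM : IsTwoPerm M := by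
      have key := hn ⟨0, hi0⟩ ⟨j + 1, hl0⟩ (by rw [Fin.lt_def]; simp) (by rw [hgl]; rfl)
      have key' : IsTwoPerm (rest.take j) := by simpa using key
      rw [hM]; exact key'
    have hnM : Nested M := hn.infix (p := [a]) (s := a :: B) (by simpa using hw)
    have hnB : Nested B := hn.infix (p := a :: (M ++ [a])) (s := []) (by rw [hw]; simp)
    have htpB : IsTwoPerm B := by
      intro x hx
      have hxw : x ∈ a :: rest := by rw [hw]; simp [hx]
      have hcx : (a :: rest).count x = 2 := htp x hxw
      by_cases hax : a = x
      · exfalso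
        subst hax
        have hcw : (a :: rest).count a = M.count a + B.count a + 2 := by
          rw [hw]; simp [List.count_append, List.count_cons]; try omega
        have hpos : 0 < B.count a := List.count_pos_iff.2 hx
        omega
      · have hcw : (a :: rest).count x = M.count x + B.count x := by
          rw [hw]
          simp [List.count_append, List.count_cons, hax]
        by_cases hxM : x ∈ M
        · exfalso
          have h2M : M.count x = 2 := htpM x hxM
          have hpos : 0 < B.count x := List.count_pos_iff.2 hx
          omega
        · have h0M : M.count x = 0 := List.count_eq_zero.2 hxM
          omega
    rw [decodeF, euler_cons, ← hjdef, ← hM, ← hB,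
      euler_decodeF M htpM hnM, euler_decodeF B htpB hnB]
    conv_rhs => rw [hrest]
termination_by w => w.length
decreasing_by
  · simp only [List.length_take, List.length_cons]; omega
  · simp only [List.length_drop, List.length_cons]; omega

theorem countP_eq_sum (S : Finset ℕ) (w : List ℕ) :
    w.countP (fun x => decide (x ∈ S)) = ∑ k ∈ S, w.count k := by
  induction w with
  | nil => simp
  | cons a w ih =>
    rw [List.countP_cons]
    simp only [List.count_cons]
    rw [Finset.sum_add_distrib, ← ih]
    congr 1
    simp [Finset.sum_ite_eq]

theorem mem_Icc_of_treed {n : ℕ} {w : List ℕ} (h : IsTreedPerm n w) :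
    ∀ x ∈ w, x ∈ Finset.Icc 1 n := by
  have hc : w.countP (fun x => decide (x ∈ Finset.Icc 1 n)) = w.length := by
    rw [countP_eq_sum, h.1, Finset.sum_congr rfl (fun k hk => h.2.1 k hk)]
    simp [mul_comm]
  intro x hx
  simpa using List.countP_eq_length.1 hc x hx

theorem twoPerm_of_treed {n : ℕ} {w : List ℕ} (h : IsTreedPerm n w) : IsTwoPerm w :=
  fun x hx => h.2.1 x (mem_Icc_of_treed h x hx)

theorem decode_mem {n : ℕ} {w : List ℕ} (h : IsTreedPerm n w) :
    (LTree.node (decodeF w)).labels.Perm (List.range' 1 n) := by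
  have he : (LTree.node (decodeF w)).euler = w := euler_decodeF w (twoPerm_of_treed h) h.2.2
  rw [List.perm_iff_count]
  intro x
  have h2 : 2 * (LTree.node (decodeF w)).labels.count x = w.count x := by
    rw [← euler_count, he]
  by_cases hx : x ∈ Finset.Icc 1 n
  · rw [List.count_eq_one_of_mem (List.nodup_range' (s := 1) (n := n))
      (by rw [List.mem_range'_1]; simp only [Finset.mem_Icc] at hx; omega)]
    have h3 := h.2.1 x hx
    omega
  · have hxw : x ∉ w := fun hc => hx (mem_Icc_of_treed h x hc)
    have h3 : w.count x = 0 := List.count_eq_zero.2 hxw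
    have h4 : (List.range' 1 n).count x = 0 := by
      apply List.count_eq_zero.2
      rw [List.mem_range'_1]
      simp only [Finset.mem_Icc, not_and, not_le] at hx
      omega
    omega

theorem euler_bijOn (n : ℕ) :
    Set.BijOn LTree.euler
      {t : LTree ℕ | t.labels.Perm (List.range' 1 n)}
      {w : List ℕ | IsTreedPerm n w} := by
  have hmt : Set.MapsTo LTree.euler {t : LTree ℕ | t.labels.Perm (List.range' 1 n)}
      {w : List ℕ | IsTreedPerm n w} := fun t ht => treed_of_euler ht
  have hmt2 : Set.MapsTo (fun w => LTree.node (decodeF w)) {w : List ℕ | IsTreedPerm n w}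
      {t : LTree ℕ | t.labels.Perm (List.range' 1 n)} := fun w hw => decode_mem hw
  have hinv : Set.InvOn (fun w => LTree.node (decodeF w)) LTree.euler
      {t : LTree ℕ | t.labels.Perm (List.range' 1 n)} {w : List ℕ | IsTreedPerm n w} := by
    constructor
    · intro t ht
      obtain ⟨ts⟩ := t
      have hnd : (LTree.node ts).labels.Nodup := ht.nodup_iff.2 (List.nodup_range' (s := 1) (n := n))
      simp only
      rw [decodeF_euler ts hnd]
    · intro w hw
      exact euler_decodeF w (twoPerm_of_treed hw) hw.2.2
  exact hinv.bijOn hmt hmt2
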